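/- Let A be a commutative ring, n ≥ 1, T ∈ ℕⁿ nonzero, and a ∈ A. Then R = A[X₁,…,Xₙ]/(X^T − a) is flat over A. Indeed, the natural map from the A-module M = { Σ_{I : T ≰ I} a_I X^I } of polynomials supported on exponents I with T ≰ I to R is bijective, so R is a free A-module. -/

import Mathlib

open MvPolynomial


namespace PQFF

variable {n : ℕ} (T : Fin n → ℕ)

/-- Finsupp version of the exponent vector. -/
noncomputable def Tf : Fin n →₀ ℕ := Finsupp.equivFunOnFinite.symm T

lemma Tf_apply (i : Fin n) : Tf T i = T i := rfl

lemma prod_eq (A : Type*) [CommRing A] :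
    (∏ i, (X i : MvPolynomial (Fin n) A) ^ T i) = monomial (Tf T) 1 := by
  rw [← prod_X_pow_eq_monomial]
  exact (Finset.prod_subset (Finset.subset_univ _) (by
    intro i _ hi
    have : Tf T i = 0 := Finsupp.notMem_support_iff.1 hi
    rw [show T i = Tf T i from rfl, this, pow_zero])).symm

def sT : Finset (Fin n) := Finset.univ.filter fun i => T i ≠ 0


lemma sT_nonempty (hT : ∃ i, T i ≠ 0) : (sT T).Nonempty := by
  obtain ⟨i, hi⟩ := hT
  exact ⟨i, by simp [sT, hi]⟩

variable (hT : ∃ i, T i ≠ 0)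

/-- The maximal `k` with `k • T ≤ I`. -/
noncomputable def kk (I : Fin n →₀ ℕ) : ℕ :=
  (sT T).inf' (sT_nonempty T hT) fun i => I i / T i

lemma kk_le (I : Fin n →₀ ℕ) (i : Fin n) : kk T hT I * T i ≤ I i := by
  by_cases h : T i = 0
  · simp [h]
  · have hmem : i ∈ sT T := by simp [sT, h]
    have := Finset.inf'_le (fun j => I j / T j) hmem
    exact (Nat.le_div_iff_mul_le (Nat.pos_of_ne_zero h)).1 this

lemma kk_max (I : Fin n →₀ ℕ) : ∃ i, I i < (kk T hT I + 1) * T i := by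
  obtain ⟨i, hmem, heq⟩ := Finset.exists_mem_eq_inf' (sT_nonempty T hT) fun j => I j / T j
  have hTi : T i ≠ 0 := by simpa [sT] using hmem
  refine ⟨i, ?_⟩
  by_contra h
  push_neg at h
  have hle := (Nat.le_div_iff_mul_le (Nat.pos_of_ne_zero hTi)).2 h
  have hkk : kk T hT I = I i / T i := heq
  omega

lemma kk_succ (I : Fin n →₀ ℕ) : kk T hT (Tf T + I) = kk T hT I + 1 := by
  have key : ∀ i ∈ sT T, (Tf T + I) i / T i = I i / T i + 1 := by
    intro i hmem
    have hTi : T i ≠ 0 := by simpa [sT] using hmem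
    have : (Tf T + I) i = I i + T i := by
      rw [Finsupp.add_apply, Tf_apply]; omega
    rw [this, Nat.add_div_right _ (Nat.pos_of_ne_zero hTi)]
  unfold kk
  apply le_antisymm
  · obtain ⟨i, hmem, heq⟩ := Finset.exists_mem_eq_inf' (sT_nonempty T hT) fun j => I j / T j
    calc ((sT T).inf' (sT_nonempty T hT) fun i => (Tf T + I) i / T i)
        ≤ (Tf T + I) i / T i := Finset.inf'_le _ hmem
      _ = I i / T i + 1 := key i hmem
      _ = _ := by rw [← heq]
  · apply Finset.le_inf'
    intro i hmem
    rw [key i hmem]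
    exact Nat.add_le_add_right (Finset.inf'_le _ hmem) 1

lemma kk_eq_zero (I : Fin n →₀ ℕ) (h : ¬ ∀ i, T i ≤ I i) : kk T hT I = 0 := by
  push_neg at h
  obtain ⟨i, hi⟩ := h
  have hTi : T i ≠ 0 := by omega
  have hmem : i ∈ sT T := by simp [sT, hTi]
  have := Finset.inf'_le (fun j => I j / T j) hmem
  have : kk T hT I ≤ I i / T i := this
  have : I i / T i = 0 := Nat.div_eq_of_lt hi
  omega

lemma not_le_reduced (I : Fin n →₀ ℕ) :
    ¬ ∀ i, T i ≤ (I - kk T hT I • Tf T) i := by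
  obtain ⟨i, hi⟩ := kk_max T hT I
  intro h
  have h1 := h i
  have h2 := kk_le T hT I i
  rw [Finsupp.tsub_apply, Finsupp.smul_apply, Tf_apply, smul_eq_mul] at h1
  have : (kk T hT I + 1) * T i = kk T hT I * T i + T i := by ring
  omega

section Psi

variable (A : Type*) [CommRing A] (a : A)

/-- The reduction map. -/
noncomputable def psi : MvPolynomial (Fin n) A →ₗ[A] MvPolynomial (Fin n) A :=
  (basisMonomials (Fin n) A).constr A fun I =>
    monomial (I - kk T hT I • Tf T) (a ^ kk T hT I)

lemma psi_monomial (I : Fin n →₀ ℕ) (c : A) :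
    psi T hT A a (monomial I c) = monomial (I - kk T hT I • Tf T) (c * a ^ kk T hT I) := by
  have : (monomial I c : MvPolynomial (Fin n) A) = c • basisMonomials (Fin n) A I := by
    rw [coe_basisMonomials, smul_monomial, smul_eq_mul, mul_one]
  rw [this, map_smul, psi, Module.Basis.constr_basis, smul_monomial, smul_eq_mul]

lemma psi_f_mul (g : MvPolynomial (Fin n) A) :
    psi T hT A a ((monomial (Tf T) 1 - C a) * g) = 0 := by
  induction g using MvPolynomial.induction_on' with
  | monomial u c =>
    have hexp : monomial (Tf T) (1 : A) * monomial u c = monomial (Tf T + u) c := by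
      rw [monomial_mul, one_mul]
    have hC : (C a : MvPolynomial (Fin n) A) * monomial u c = monomial u (a * c) := by
      rw [C_mul_monomial]
    rw [sub_mul, hexp, hC, map_sub, psi_monomial, psi_monomial, kk_succ]
    have hE : Tf T + u - (kk T hT u + 1) • Tf T = u - kk T hT u • Tf T := by
      ext i
      simp only [Finsupp.tsub_apply, Finsupp.add_apply, Finsupp.smul_apply, smul_eq_mul]
      have : (kk T hT u + 1) * Tf T i = kk T hT u * Tf T i + Tf T i := by ring
      omega
    rw [hE]
    rw [show c * a ^ (kk T hT u + 1) = a * c * a ^ kk T hT u by ring]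
    exact sub_self _
  | add p q hp hq =>
    rw [mul_add, map_add, hp, hq, add_zero]

lemma psi_sub_mem (F : MvPolynomial (Fin n) A) :
    F - psi T hT A a F ∈ Ideal.span {monomial (Tf T) 1 - C a} := by
  induction F using MvPolynomial.induction_on' with
  | monomial u c =>
    rw [psi_monomial]
    have key : (monomial u c : MvPolynomial (Fin n) A)
        - monomial (u - kk T hT u • Tf T) (c * a ^ kk T hT u)
        = (monomial (kk T hT u • Tf T) 1 - C (a ^ kk T hT u))
          * monomial (u - kk T hT u • Tf T) c := by
      have hexp : kk T hT u • Tf T + (u - kk T hT u • Tf T) = u := by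
        ext i
        simp only [Finsupp.add_apply, Finsupp.tsub_apply, Finsupp.smul_apply, smul_eq_mul,
          Tf_apply]
        have := kk_le T hT u i
        omega
      rw [sub_mul, monomial_mul, one_mul, C_mul_monomial, hexp, mul_comm c]
    rw [key]
    apply Ideal.mul_mem_right
    apply Ideal.mem_span_singleton.2
    have : (monomial (kk T hT u • Tf T) (1 : A) : MvPolynomial (Fin n) A)
        = (monomial (Tf T) 1) ^ kk T hT u := by
      rw [monomial_pow, one_pow]
    rw [this, show (C (a ^ kk T hT u) : MvPolynomial (Fin n) A)
        = (C a) ^ kk T hT u by rw [C_pow]]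
    exact sub_dvd_pow_sub_pow _ _ _
  | add p q hp hq =>
    have : p + q - psi T hT A a (p + q) = (p - psi T hT A a p) + (q - psi T hT A a q) := by
      rw [map_add]; ring
    rw [this]
    exact Ideal.add_mem _ hp hq

lemma psi_mem_M (F : MvPolynomial (Fin n) A) (J : Fin n →₀ ℕ) (hJ : ∀ i, T i ≤ J i) :
    coeff J (psi T hT A a F) = 0 := by
  induction F using MvPolynomial.induction_on' with
  | monomial u c =>
    rw [psi_monomial, coeff_monomial]
    classical
    rw [if_neg]
    intro hEq
    exact not_le_reduced T hT u (hEq ▸ hJ)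
  | add p q hp hq =>
    rw [map_add, coeff_add, hp, hq, add_zero]

lemma psi_of_mem (F : MvPolynomial (Fin n) A)
    (hF : ∀ I : Fin n →₀ ℕ, (∀ i, T i ≤ I i) → coeff I F = 0) :
    psi T hT A a F = F := by
  conv_lhs => rw [F.as_sum]
  conv_rhs => rw [F.as_sum]
  rw [map_sum]
  refine Finset.sum_congr rfl fun v hv => ?_
  have h0 : kk T hT v = 0 := by
    apply kk_eq_zero
    intro hall
    exact (mem_support_iff.1 hv) (hF v hall)
  rw [psi_monomial, h0, zero_smul, tsub_zero, pow_zero, mul_one]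

end Psi

end PQFF

open PQFF

/-- Let `A` be a commutative ring, `T ∈ ℕⁿ` nonzero, and `a ∈ A`.  Then
`R = A[X₁,…,Xₙ]/(X^T − a)` is flat over `A`; indeed the natural map from the
`A`-module of polynomials supported on exponents `I` with `T ≰ I` to `R` is
bijective, so `R` is a free `A`-module. -/
theorem polynomial_quotient_flat_free
    (A : Type*) [CommRing A]
    (n : ℕ) (hn : 1 ≤ n) (T : Fin n → ℕ) (hT : T ≠ 0) (a : A) :
    Set.BijOn
      (Ideal.Quotient.mk (Ideal.span {(∏ i, (X i : MvPolynomial (Fin n) A) ^ T i) - C a}))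
      {F : MvPolynomial (Fin n) A | ∀ I : Fin n →₀ ℕ, (∀ i, T i ≤ I i) → coeff I F = 0}
      Set.univ ∧
    Module.Flat A
      (MvPolynomial (Fin n) A ⧸
        Ideal.span {(∏ i, (X i : MvPolynomial (Fin n) A) ^ T i) - C a}) ∧
    Module.Free A
      (MvPolynomial (Fin n) A ⧸
        Ideal.span {(∏ i, (X i : MvPolynomial (Fin n) A) ^ T i) - C a}) := by
  have hT' : ∃ i, T i ≠ 0 := by
    by_contra h
    push_neg at h
    exact hT (funext h)
  have hprod : (∏ i, (X i : MvPolynomial (Fin n) A) ^ T i) = monomial (Tf T) 1 :=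
    prod_eq T A
  rw [hprod]
  set f : MvPolynomial (Fin n) A := monomial (Tf T) 1 - C a with hf
  set Idl := Ideal.span {f} with hIdl
  set M : Set (MvPolynomial (Fin n) A) :=
    {F | ∀ I : Fin n →₀ ℕ, (∀ i, T i ≤ I i) → coeff I F = 0} with hM
  -- BijOn
  have hinj : Set.InjOn (Ideal.Quotient.mk Idl) M := by
    intro F hF G hG h
    have hsub : F - G ∈ Idl := (Ideal.Quotient.mk_eq_mk_iff_sub_mem F G).1 h
    obtain ⟨g, hg⟩ := Ideal.mem_span_singleton'.1 hsub
    have hmem : ∀ I : Fin n →₀ ℕ, (∀ i, T i ≤ I i) → coeff I (F - G) = 0 := by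
      intro I hI
      rw [coeff_sub, hF I hI, hG I hI, sub_zero]
    have h1 : psi T hT' A a (F - G) = F - G := psi_of_mem T hT' A a _ hmem
    have h2 : psi T hT' A a (F - G) = 0 := by
      rw [← hg, mul_comm]
      exact psi_f_mul T hT' A a g
    rw [h1] at h2
    exact sub_eq_zero.1 h2
  have hsurj : Set.SurjOn (Ideal.Quotient.mk Idl) M Set.univ := by
    intro y _
    obtain ⟨F, rfl⟩ := Ideal.Quotient.mk_surjective y
    refine ⟨psi T hT' A a F, fun I hI => psi_mem_M T hT' A a F I hI, ?_⟩
    rw [Ideal.Quotient.mk_eq_mk_iff_sub_mem]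
    have := psi_sub_mem T hT' A a F
    simpa using Idl.neg_mem this
  have hbij : Set.BijOn (Ideal.Quotient.mk Idl) M Set.univ :=
    ⟨fun _ _ => Set.mem_univ _, hinj, hsurj⟩
  refine ⟨hbij, ?_⟩
  -- Freeness
  classical
  set Msub : Submodule A (MvPolynomial (Fin n) A) :=
    { carrier := M
      add_mem' := by
        intro p q hp hq I hI
        rw [coeff_add, hp I hI, hq I hI, add_zero]
      zero_mem' := by
        intro I hI
        rw [coeff_zero]
      smul_mem' := by
        intro c p hp I hI
        rw [MvPolynomial.coeff_smul, hp I hI, smul_zero] } with hMsub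
  set S := {I : Fin n →₀ ℕ // ¬ ∀ i, T i ≤ I i} with hS
  set v : S → MvPolynomial (Fin n) A := fun I => monomial I.1 1 with hv
  have hli : LinearIndependent A v := by
    have := (basisMonomials (Fin n) A).linearIndependent.comp
      (Subtype.val : S → (Fin n →₀ ℕ)) Subtype.val_injective
    rwa [coe_basisMonomials] at this
  have hspan : Submodule.span A (Set.range v) = Msub := by
    apply le_antisymm
    · rw [Submodule.span_le]
      rintro _ ⟨I, rfl⟩
      intro J hJ
      rw [hv]
      rw [coeff_monomial, if_neg]
      intro hEq
      exact I.2 (hEq ▸ hJ)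
    · intro F hF
      rw [F.as_sum]
      apply Submodule.sum_mem
      intro w hw
      have hwS : ¬ ∀ i, T i ≤ w i := fun hall => (mem_support_iff.1 hw) (hF w hall)
      have : (monomial w (coeff w F) : MvPolynomial (Fin n) A)
          = coeff w F • monomial w 1 := by
        rw [smul_monomial, smul_eq_mul, mul_one]
      rw [this]
      exact Submodule.smul_mem _ _ (Submodule.subset_span ⟨⟨w, hwS⟩, rfl⟩)
  have hfreeM : Module.Free A Msub := by
    have b := Module.Basis.span hli
    exact Module.Free.of_basis (b.map (LinearEquiv.ofEq _ _ hspan))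
  set ℓ : Msub →ₗ[A] (MvPolynomial (Fin n) A ⧸ Idl) :=
    (Ideal.Quotient.mkₐ A Idl).toLinearMap.comp Msub.subtype with hℓ
  have hbijl : Function.Bijective ℓ := by
    constructor
    · intro x y hxy
      apply Subtype.ext
      exact hinj x.2 y.2 hxy
    · intro y
      obtain ⟨F, hF, hFy⟩ := hsurj (Set.mem_univ y)
      exact ⟨⟨F, hF⟩, hFy⟩
  have e : Msub ≃ₗ[A] (MvPolynomial (Fin n) A ⧸ Idl) := LinearEquiv.ofBijective ℓ hbijl
  have hfree : Module.Free A (MvPolynomial (Fin n) A ⧸ Idl) := Module.Free.of_equiv e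
  exact ⟨Module.Flat.of_free, hfree⟩
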